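/- Let F be a continuous strictly increasing CDF with bounded continuous inverse. Define φ(k) = ∫₀^{1−k} F^{-1}(q) · (q/(1−q)) · (k/(1−k)) · (1/q − k/(q(1−q))) dq for k ∈ (0,1). Then the derivative of φ satisfies φ'(k) = (1/(1−k)²) ∫_k^1 F^{-1}(1−q) (1/q − (2k − k²)/q²) dq. -/

import Mathlib

open MeasureTheory intervalIntegral Set

theorem stmt_15 (F Finv : ℝ → ℝ)
    (hF : Continuous F) (hFmono : StrictMono F)
    (hFinv : ∀ q ∈ Set.Icc (0:ℝ) 1, F (Finv q) = q)
    (hFinvCont : Continuous Finv)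
    (M : ℝ) (hM : ∀ q, |Finv q| ≤ M) :
    ∀ k ∈ Set.Ioo (0:ℝ) 1,
      HasDerivAt
        (fun k : ℝ => ∫ q in (0:ℝ)..(1 - k),
          Finv q * (q / (1 - q)) * (k / (1 - k)) * (1 / q - k / (q * (1 - q))))
        ((1 / (1 - k) ^ 2) *
          ∫ q in k..1, Finv (1 - q) * (1 / q - (2 * k - k ^ 2) / q ^ 2))
        k := by
  intro k hk
  obtain ⟨hk0, hk1⟩ := hk
  have h1k : (0:ℝ) < 1 - k := by linarith
  set g : ℝ → ℝ := fun q => Finv (1 - q) with hg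
  have hgc : Continuous g := hFinvCont.comp (continuous_const.sub continuous_id)
  -- continuity / integrability of g q / q and g q / q^2 on [t, 1] for t > 0
  have hco1 : ∀ t : ℝ, 0 < t → ContinuousOn (fun q => g q / q) (Set.Icc t 1) := by
    intro t ht
    exact hgc.continuousOn.div continuousOn_id fun y hy => ne_of_gt (lt_of_lt_of_le ht hy.1)
  have hco2 : ∀ t : ℝ, 0 < t → ContinuousOn (fun q => g q / q ^ 2) (Set.Icc t 1) := by
    intro t ht
    exact hgc.continuousOn.div ((continuous_pow 2).continuousOn)
      fun y hy => pow_ne_zero 2 (ne_of_gt (lt_of_lt_of_le ht hy.1))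
  have int1 : ∀ t : ℝ, 0 < t → t ≤ 1 → IntervalIntegrable (fun q => g q / q) volume t 1 := by
    intro t ht ht1
    exact ContinuousOn.intervalIntegrable (by rw [Set.uIcc_of_le ht1]; exact hco1 t ht)
  have int2 : ∀ t : ℝ, 0 < t → t ≤ 1 → IntervalIntegrable (fun q => g q / q ^ 2) volume t 1 := by
    intro t ht ht1
    exact ContinuousOn.intervalIntegrable (by rw [Set.uIcc_of_le ht1]; exact hco2 t ht)
  set A : ℝ → ℝ := fun u => ∫ q in u..1, g q / q with hA
  set B : ℝ → ℝ := fun u => ∫ q in u..1, g q / q ^ 2 with hB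
  -- linearity
  have lin : ∀ t : ℝ, 0 < t → t ≤ 1 → ∀ c : ℝ,
      (∫ q in t..1, g q * (1 / q - c / q ^ 2)) = A t - c * B t := by
    intro t ht ht1 c
    have : (∫ q in t..1, g q * (1 / q - c / q ^ 2))
        = ∫ q in t..1, (g q / q - c * (g q / q ^ 2)) := by
      apply intervalIntegral.integral_congr
      intro x _
      ring
    rw [this, intervalIntegral.integral_sub (int1 t ht ht1) ((int2 t ht ht1).const_mul c),
      intervalIntegral.integral_const_mul]
  -- the function agrees with the nicer form on (0,1)
  have heq : ∀ t ∈ Set.Ioo (0:ℝ) 1,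
      (∫ q in (0:ℝ)..(1 - t),
          Finv q * (q / (1 - q)) * (t / (1 - t)) * (1 / q - t / (q * (1 - q))))
        = (t / (1 - t)) * (A t - t * B t) := by
    intro t ht
    obtain ⟨ht0, ht1⟩ := ht
    have h1t : (0:ℝ) < 1 - t := by linarith
    have step1 : (∫ q in (0:ℝ)..(1 - t),
          Finv q * (q / (1 - q)) * (t / (1 - t)) * (1 / q - t / (q * (1 - q))))
        = ∫ q in (0:ℝ)..(1 - t),
            (fun y => g y * (t / (1 - t)) * (1 / y - t / y ^ 2)) (1 - q) := by
      apply intervalIntegral.integral_congr_ae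
      have h0 : ∀ᵐ x : ℝ, x ≠ 0 ∧ x ≠ 1 := by
        have : ({0, 1} : Set ℝ).Countable := ((Set.finite_singleton (1:ℝ)).insert 0).countable
        filter_upwards [this.ae_notMem volume] with x hx
        simp only [Set.mem_insert_iff, Set.mem_singleton_iff, not_or] at hx
        exact hx
      filter_upwards [h0] with x hx _
      obtain ⟨hx0, hx1⟩ := hx
      have hx1' : (1:ℝ) - x ≠ 0 := sub_ne_zero.mpr (Ne.symm hx1)
      simp only [hg]
      have : (1:ℝ) - (1 - x) = x := by ring
      rw [this]
      field_simp
    rw [step1, intervalIntegral.integral_comp_sub_left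
      (fun y => g y * (t / (1 - t)) * (1 / y - t / y ^ 2)) 1]
    rw [show (1:ℝ) - (1 - t) = t by ring, sub_zero]
    have step3 : (∫ y in t..1, g y * (t / (1 - t)) * (1 / y - t / y ^ 2))
        = ∫ y in t..1, (t / (1 - t)) * (g y * (1 / y - t / y ^ 2)) := by
      apply intervalIntegral.integral_congr
      intro x _
      ring
    rw [step3, intervalIntegral.integral_const_mul, lin t ht0 ht1.le t]
  -- derivatives of A and B at k
  have hmeas1 : StronglyMeasurableAtFilter (fun q => g q / q) (nhds k) volume := by
    refine ContinuousOn.stronglyMeasurableAtFilter (s := Set.Ioi 0) isOpen_Ioi ?_ k hk0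
    exact hgc.continuousOn.div continuousOn_id fun y hy => ne_of_gt hy
  have hmeas2 : StronglyMeasurableAtFilter (fun q => g q / q ^ 2) (nhds k) volume := by
    refine ContinuousOn.stronglyMeasurableAtFilter (s := Set.Ioi 0) isOpen_Ioi ?_ k hk0
    exact hgc.continuousOn.div ((continuous_pow 2).continuousOn)
      fun y hy => pow_ne_zero 2 (ne_of_gt hy)
  have hA' : HasDerivAt A (-(g k / k)) k :=
    intervalIntegral.integral_hasDerivAt_left (int1 k hk0 hk1.le) hmeas1
      ((hgc.continuousAt).div continuousAt_id (ne_of_gt hk0))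
  have hB' : HasDerivAt B (-(g k / k ^ 2)) k :=
    intervalIntegral.integral_hasDerivAt_left (int2 k hk0 hk1.le) hmeas2
      ((hgc.continuousAt).div ((continuous_pow 2).continuousAt)
        (pow_ne_zero 2 (ne_of_gt hk0)))
  -- derivative of t ↦ t/(1-t)
  have hu := (hasDerivAt_id k).div ((hasDerivAt_const k 1).sub (hasDerivAt_id k)) (ne_of_gt h1k)
  simp only [id_eq] at hu
  have hv : HasDerivAt (fun t : ℝ => A t - t * B t)
      (-(g k / k) - (1 * B k + k * -(g k / k ^ 2))) k :=
    hA'.sub ((hasDerivAt_id k).mul hB')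
  have hmain := hu.mul hv
  have heq2 : (∫ q in k..1, Finv (1 - q) * (1 / q - (2 * k - k ^ 2) / q ^ 2))
      = A k - (2 * k - k ^ 2) * B k := lin k hk0 hk1.le (2 * k - k ^ 2)
  rw [heq2]
  refine HasDerivAt.congr_of_eventuallyEq ?_
    (Filter.eventuallyEq_of_mem (isOpen_Ioo.mem_nhds ⟨hk0, hk1⟩) heq)
  refine hmain.congr_deriv ?_
  have hk0' : k ≠ 0 := ne_of_gt hk0
  have h1k' : (1:ℝ) - k ≠ 0 := ne_of_gt h1k
  simp only [Pi.sub_apply, Pi.div_apply, id_eq]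
  field_simp
  ring
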